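/- For the Lorentzian catenoid parameterized in polar coordinates via Weierstrass data g = z, φ₃ = dz/z on {0 < r < |z| < 1}, the surface is asymptotic to the light cone at the singularity: writing X(re^{iθ}) for the immersion normalized so X → 0 as r → 1, one has X(re^{iθ})/x₃(X(re^{iθ})) → (sin θ, −cos θ, 1) as r → 1, uniformly in θ. -/

import Mathlib

open Complex

/-- First coordinate of the Lorentzian catenoid (`f ≡ 1`) in polar coordinates:
`2X = Re ∫₁^r (1/s)·(i(e^{−iθ}/s − s e^{iθ}), −(e^{−iθ}/s + s e^{iθ}), 2) ds`. -/
noncomputable def catX₁ (r θ : ℝ) : ℝ :=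
  (1 / 2) * ∫ s in (1 : ℝ)..r,
    ((I * (Complex.exp (-(θ : ℂ) * I) / (s : ℂ) - (s : ℂ) * Complex.exp ((θ : ℂ) * I)))
      / (s : ℂ)).re

/-- Second coordinate of the Lorentzian catenoid in polar coordinates. -/
noncomputable def catX₂ (r θ : ℝ) : ℝ :=
  (1 / 2) * ∫ s in (1 : ℝ)..r,
    ((-(Complex.exp (-(θ : ℂ) * I) / (s : ℂ) + (s : ℂ) * Complex.exp ((θ : ℂ) * I)))
      / (s : ℂ)).re

/-- Third coordinate of the Lorentzian catenoid in polar coordinates. -/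
noncomputable def catX₃ (r θ : ℝ) : ℝ :=
  (1 / 2) * ∫ s in (1 : ℝ)..r, ((2 : ℂ) / (s : ℂ)).re

/-! ### Auxiliary computations -/

lemma cat_re1 (θ : ℝ) {s : ℝ} (hs : s ≠ 0) :
    ((I * (Complex.exp (-(θ : ℂ) * I) / (s : ℂ) - (s : ℂ) * Complex.exp ((θ : ℂ) * I)))
      / (s : ℂ)).re = Real.sin θ * (1 / s ^ 2 + 1) := by
  rw [show -(θ:ℂ) * I = ((-θ : ℝ) : ℂ) * I by push_cast; ring]
  rw [Complex.exp_mul_I, Complex.exp_mul_I]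
  simp only [← Complex.ofReal_cos, ← Complex.ofReal_sin, Real.cos_neg, Real.sin_neg,
    Complex.div_ofReal_re, Complex.div_ofReal_im, Complex.sub_re, Complex.sub_im,
    Complex.mul_re, Complex.mul_im, Complex.I_re, Complex.I_im, Complex.add_re, Complex.add_im,
    Complex.ofReal_re, Complex.ofReal_im, Complex.ofReal_neg, Complex.neg_re, Complex.neg_im]
  field_simp
  simp only [Complex.sin_neg, Complex.cos_neg, Complex.neg_re, Complex.neg_im, Complex.sin_ofReal_re, Complex.cos_ofReal_re, Complex.sin_ofReal_im, Complex.cos_ofReal_im]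
  ring

lemma cat_re2 (θ : ℝ) {s : ℝ} (hs : s ≠ 0) :
    ((-(Complex.exp (-(θ : ℂ) * I) / (s : ℂ) + (s : ℂ) * Complex.exp ((θ : ℂ) * I)))
      / (s : ℂ)).re = -Real.cos θ * (1 / s ^ 2 + 1) := by
  rw [show -(θ:ℂ) * I = ((-θ : ℝ) : ℂ) * I by push_cast; ring]
  rw [Complex.exp_mul_I, Complex.exp_mul_I]
  simp only [← Complex.ofReal_cos, ← Complex.ofReal_sin, Real.cos_neg, Real.sin_neg,
    Complex.div_ofReal_re, Complex.div_ofReal_im, Complex.sub_re, Complex.sub_im,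
    Complex.mul_re, Complex.mul_im, Complex.I_re, Complex.I_im, Complex.add_re, Complex.add_im,
    Complex.ofReal_re, Complex.ofReal_im, Complex.ofReal_neg, Complex.neg_re, Complex.neg_im]
  field_simp
  simp only [Complex.sin_neg, Complex.cos_neg, Complex.neg_re, Complex.neg_im, Complex.sin_ofReal_re, Complex.cos_ofReal_re, Complex.sin_ofReal_im, Complex.cos_ofReal_im]
  ring

lemma cat_integral (r : ℝ) (hr : 0 < r) (c : ℝ) :
    ∫ s in (1:ℝ)..r, c * (1/s^2 + 1) = c * (r - 1/r) := by
  have h0 : (0:ℝ) ∉ Set.uIcc (1:ℝ) r := Set.notMem_uIcc_of_lt one_pos hr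
  rw [intervalIntegral.integral_const_mul]
  congr 1
  have heq : Set.EqOn (fun s : ℝ => 1/s^2 + 1) (fun s : ℝ => s ^ (-2:ℤ) + 1) (Set.uIcc 1 r) := by
    intro s hs
    have hs0 : s ≠ 0 := fun h => h0 (h ▸ hs)
    simp [zpow_neg, hs0]
  rw [intervalIntegral.integral_congr heq,
    intervalIntegral.integral_add (intervalIntegral.intervalIntegrable_zpow (Or.inr h0))
      intervalIntegrable_const,
    integral_zpow (Or.inr ⟨by decide, h0⟩)]
  simp
  ring

lemma catX₁_eq (r θ : ℝ) (hr : 0 < r) :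
    catX₁ r θ = Real.sin θ * (r - 1/r) / 2 := by
  have h0 : (0:ℝ) ∉ Set.uIcc (1:ℝ) r := Set.notMem_uIcc_of_lt one_pos hr
  unfold catX₁
  rw [intervalIntegral.integral_congr
      (g := fun s : ℝ => Real.sin θ * (1/s^2 + 1))
      (fun s hs => cat_re1 θ (fun h => h0 (h ▸ hs))),
    cat_integral r hr]
  ring

lemma catX₂_eq (r θ : ℝ) (hr : 0 < r) :
    catX₂ r θ = -Real.cos θ * (r - 1/r) / 2 := by
  have h0 : (0:ℝ) ∉ Set.uIcc (1:ℝ) r := Set.notMem_uIcc_of_lt one_pos hr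
  unfold catX₂
  rw [intervalIntegral.integral_congr
      (g := fun s : ℝ => -Real.cos θ * (1/s^2 + 1))
      (fun s hs => cat_re2 θ (fun h => h0 (h ▸ hs))),
    cat_integral r hr]
  ring

lemma catX₃_eq (r θ : ℝ) (hr : 0 < r) : catX₃ r θ = Real.log r := by
  have h0 : (0:ℝ) ∉ Set.uIcc (1:ℝ) r := Set.notMem_uIcc_of_lt one_pos hr
  unfold catX₃
  have h : ∀ s : ℝ, ((2:ℂ)/(s:ℂ)).re = 2 * (1/s) := by
    intro s; simp [Complex.div_ofReal_re]; ring
  simp_rw [h]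
  rw [intervalIntegral.integral_const_mul, integral_one_div h0]
  simp

open Filter Topology in
lemma cat_tendsto :
    Tendsto (fun r : ℝ => (r - 1/r)/(2*Real.log r)) (𝓝[<] 1) (𝓝 1) := by
  have h1 : Tendsto (fun y : ℝ => Real.log y / (y - 1)) (𝓝[≠] 1) (𝓝 1) := by
    have h := Real.hasDerivAt_log one_ne_zero
    rw [hasDerivAt_iff_tendsto_slope] at h
    simpa [slope_fun_def, Real.log_one, div_eq_inv_mul] using h
  have h2 : Tendsto (fun y : ℝ => (y - 1) / Real.log y) (𝓝[≠] 1) (𝓝 1) := by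
    have := h1.inv₀ one_ne_zero
    simpa [inv_div] using this
  have h3 : Tendsto (fun y : ℝ => (1 + 1/y)/2) (𝓝[≠] 1) (𝓝 1) := by
    have hc : ContinuousAt (fun y : ℝ => (1 + 1/y)/2) 1 := by
      have : ContinuousAt (fun y : ℝ => 1 + 1/y) 1 :=
        continuousAt_const.add (continuousAt_const.div continuousAt_id one_ne_zero)
      exact this.div_const 2
    have := hc.tendsto.mono_left (nhdsWithin_le_nhds (s := {(1:ℝ)}ᶜ))
    norm_num at this
    simpa [one_div] using this
  have h4 := h2.mul h3
  norm_num at h4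
  have hle : 𝓝[<] (1:ℝ) ≤ 𝓝[≠] (1:ℝ) := nhdsWithin_mono _ (fun x hx => ne_of_lt hx)
  refine ((h4.mono_left hle).congr' ?_)
  have hpos : ∀ᶠ r in 𝓝[<] (1:ℝ), (0:ℝ) < r :=
    eventually_nhdsWithin_of_eventually_nhds (eventually_gt_nhds one_pos)
  have hlt : ∀ᶠ r in 𝓝[<] (1:ℝ), r < 1 := eventually_mem_nhdsWithin
  filter_upwards [hpos, hlt] with r hr0 hr1
  have hlog : Real.log r ≠ 0 := ne_of_lt (Real.log_neg hr0 hr1)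
  field_simp
  ring

/-- The Lorentzian catenoid is asymptotic to the light cone at its singularity:
`X(re^{iθ})/x₃(X(re^{iθ})) → (sin θ, −cos θ, 1)` as `r → 1⁻`, uniformly in `θ`. -/
theorem catenoid_asymptotic_to_light_cone :
    ∀ ε > (0 : ℝ), ∃ δ > (0 : ℝ), ∀ r θ : ℝ, 0 < r → 1 - δ < r → r < 1 →
      |catX₁ r θ / catX₃ r θ - Real.sin θ| < ε
      ∧ |catX₂ r θ / catX₃ r θ - (-Real.cos θ)| < ε
      ∧ |catX₃ r θ / catX₃ r θ - 1| < ε := by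
  intro ε hε
  obtain ⟨δ, hδ, H⟩ := Metric.tendsto_nhdsWithin_nhds.mp cat_tendsto ε hε
  refine ⟨δ, hδ, ?_⟩
  intro r θ hr0 hrδ hr1
  have hdist : dist r 1 < δ := by
    rw [Real.dist_eq, abs_lt]; constructor <;> linarith
  have hg := H hr1 hdist
  rw [Real.dist_eq] at hg
  set g : ℝ := (r - 1/r)/(2*Real.log r) with hgdef
  have hlog : Real.log r ≠ 0 := ne_of_lt (Real.log_neg hr0 hr1)
  have e1 : catX₁ r θ / catX₃ r θ = Real.sin θ * g := by
    rw [catX₁_eq r θ hr0, catX₃_eq r θ hr0, hgdef, div_div, mul_div_assoc]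
  have e2 : catX₂ r θ / catX₃ r θ = -Real.cos θ * g := by
    rw [catX₂_eq r θ hr0, catX₃_eq r θ hr0, hgdef, div_div, mul_div_assoc]
  have key : ∀ a : ℝ, |a| ≤ 1 → |a * g - a| < ε := by
    intro a ha
    calc |a * g - a| = |a| * |g - 1| := by rw [← abs_mul]; ring_nf
      _ ≤ 1 * |g - 1| := mul_le_mul_of_nonneg_right ha (abs_nonneg _)
      _ = |g - 1| := one_mul _
      _ < ε := hg
  refine ⟨?_, ?_, ?_⟩
  · rw [e1]; exact key _ (Real.abs_sin_le_one θ)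
  · rw [e2]
    have := key (-Real.cos θ) (by simpa using Real.abs_cos_le_one θ)
    simpa using this
  · rw [catX₃_eq r θ hr0, div_self hlog]
    simpa using hε
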